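/- arXiv:0910.5936 — 6 statements merged into one kernel-verified Lean document; each statement's English description precedes it below -/
import Mathlib

section
/- For a matrix A in K^{n×m} (K = ℝ or ℂ, n ≤ m), the Frobenius distance from A to the set N of rank-deficient matrices (matrices of rank < n) equals the smallest singular value σ_n(A); that is, inf_{S ∈ N} ‖A − S‖_F = σ_n(A). -/
open scoped BigOperators
open Matrix

/-- The Frobenius norm of a matrix. -/
noncomputable def frobNorm {𝕜 : Type*} [RCLike 𝕜] {n m : ℕ} (A : Matrix (Fin n) (Fin m) 𝕜) : ℝ :=
  Real.sqrt (∑ i, ∑ j, ‖A i j‖ ^ 2)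

/-- The smallest singular value `σ_n(A)` of an `n × m` matrix (`n ≤ m`),
characterized as the minimum of `‖Aᴴ u‖` over unit vectors `u ∈ 𝕜ⁿ`. -/
noncomputable def sigmaMin {𝕜 : Type*} [RCLike 𝕜] {n m : ℕ} (A : Matrix (Fin n) (Fin m) 𝕜) : ℝ :=
  ⨅ u : Metric.sphere (0 : EuclideanSpace 𝕜 (Fin n)) 1, ‖Matrix.toEuclideanLin Aᴴ (u : EuclideanSpace 𝕜 (Fin n))‖

section Helpers

open scoped ComplexOrder

variable {𝕜 : Type*} [RCLike 𝕜] {n m : ℕ}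

lemma my_sum_sq_of_unit {u : EuclideanSpace 𝕜 (Fin n)} (hu : ‖u‖ = 1) :
    ∑ i, ‖u i‖ ^ 2 = 1 := by
  have h := EuclideanSpace.norm_eq u
  rw [hu] at h
  have h0 : (0:ℝ) ≤ ∑ i, ‖u i‖ ^ 2 := Finset.sum_nonneg fun i _ => sq_nonneg _
  nlinarith [Real.sq_sqrt h0]

lemma my_norm_toEuclideanLin (M : Matrix (Fin n) (Fin m) 𝕜) (u : EuclideanSpace 𝕜 (Fin n)) :
    ‖Matrix.toEuclideanLin Mᴴ u‖ =
      Real.sqrt (∑ j, ‖(Mᴴ *ᵥ (WithLp.equiv 2 (Fin n → 𝕜)) u) j‖ ^ 2) := by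
  rw [Matrix.toEuclideanLin_apply, EuclideanSpace.norm_eq]
  rfl

lemma my_norm_toEuclideanLin_le_frobNorm (M : Matrix (Fin n) (Fin m) 𝕜)
    {u : EuclideanSpace 𝕜 (Fin n)} (hu : ‖u‖ = 1) :
    ‖Matrix.toEuclideanLin Mᴴ u‖ ≤ frobNorm M := by
  rw [my_norm_toEuclideanLin, frobNorm]
  apply Real.sqrt_le_sqrt
  have key : ∀ j, ‖(Mᴴ *ᵥ (WithLp.equiv 2 (Fin n → 𝕜)) u) j‖ ^ 2 ≤ ∑ i, ‖M i j‖ ^ 2 := by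
    intro j
    have h1 : ‖(Mᴴ *ᵥ (WithLp.equiv 2 (Fin n → 𝕜)) u) j‖ ≤ ∑ i, ‖M i j‖ * ‖u i‖ := by
      show ‖∑ i, Mᴴ j i * u i‖ ≤ _
      refine (norm_sum_le _ _).trans (le_of_eq ?_)
      refine Finset.sum_congr rfl fun i _ => ?_
      rw [norm_mul, Matrix.conjTranspose_apply, norm_star]
    calc ‖(Mᴴ *ᵥ (WithLp.equiv 2 (Fin n → 𝕜)) u) j‖ ^ 2
        ≤ (∑ i, ‖M i j‖ * ‖u i‖) ^ 2 := by
          apply pow_le_pow_left₀ (norm_nonneg _) h1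
      _ ≤ (∑ i, ‖M i j‖ ^ 2) * (∑ i, ‖u i‖ ^ 2) :=
          Finset.sum_mul_sq_le_sq_mul_sq _ _ _
      _ = ∑ i, ‖M i j‖ ^ 2 := by rw [my_sum_sq_of_unit hu, mul_one]
  calc ∑ j, ‖(Mᴴ *ᵥ (WithLp.equiv 2 (Fin n → 𝕜)) u) j‖ ^ 2
      ≤ ∑ j, ∑ i, ‖M i j‖ ^ 2 := Finset.sum_le_sum fun j _ => key j
    _ = ∑ i, ∑ j, ‖M i j‖ ^ 2 := Finset.sum_comm

lemma my_rank_lt_of_vecMul_eq_zero {S : Matrix (Fin n) (Fin m) 𝕜} {u : Fin n → 𝕜}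
    (hu : u ≠ 0) (h : Matrix.vecMul (star u) S = 0) : S.rank < n := by
  classical
  let φ : (Fin n → 𝕜) →ₗ[𝕜] 𝕜 :=
    { toFun := fun x => dotProduct (star u) x
      map_add' := fun x y => dotProduct_add _ _ _
      map_smul' := fun c x => by simp }
  have hrange : LinearMap.range S.mulVecLin ≤ LinearMap.ker φ := by
    rintro _ ⟨x, rfl⟩
    simp only [LinearMap.mem_ker, Matrix.mulVecLin_apply]
    show dotProduct (star u) (S *ᵥ x) = 0
    rw [dotProduct_mulVec, h, zero_dotProduct]
  have hne : LinearMap.ker φ ≠ ⊤ := by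
    intro htop
    have hu0 : φ u = 0 := by
      have : u ∈ LinearMap.ker φ := htop ▸ Submodule.mem_top
      exact LinearMap.mem_ker.mp this
    have hdp : ∑ i, star (u i) * u i = (0 : 𝕜) := hu0
    have hsum : ∑ i, (‖u i‖ ^ 2 : ℝ) = 0 := by
      have : ∀ i, star (u i) * u i = ((‖u i‖ ^ 2 : ℝ) : 𝕜) := fun i => by
        rw [RCLike.star_def, RCLike.conj_mul]; norm_cast
      rw [Finset.sum_congr rfl fun i _ => this i, ← RCLike.ofReal_sum] at hdp
      exact_mod_cast hdp
    apply hu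
    funext i
    have hi : ‖u i‖ ^ 2 = 0 := by
      have := (Finset.sum_eq_zero_iff_of_nonneg
        (fun i _ => sq_nonneg (‖u i‖))).mp hsum i (Finset.mem_univ i)
      exact this
    have : ‖u i‖ = 0 := by nlinarith
    simpa using norm_eq_zero.mp this
  have h1 : S.rank ≤ Module.finrank 𝕜 (LinearMap.ker φ) :=
    Submodule.finrank_mono hrange
  have h2 : Module.finrank 𝕜 (LinearMap.ker φ) < Module.finrank 𝕜 (Fin n → 𝕜) :=
    Submodule.finrank_lt hne
  have h3 : Module.finrank 𝕜 (Fin n → 𝕜) = n := by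
    rw [Module.finrank_fintype_fun_eq_card, Fintype.card_fin]
  omega

lemma my_exists_unit_left_kernel {S : Matrix (Fin n) (Fin m) 𝕜} (hS : S.rank < n) :
    ∃ u : EuclideanSpace 𝕜 (Fin n), ‖u‖ = 1 ∧
      Sᴴ *ᵥ ((WithLp.equiv 2 (Fin n → 𝕜)) u) = 0 := by
  have hrank : (Sᴴ).rank < n := by rw [Matrix.rank_conjTranspose]; exact hS
  have hker : LinearMap.ker (Sᴴ.mulVecLin) ≠ ⊥ := by
    intro hbot
    have hrn := LinearMap.finrank_range_add_finrank_ker (Sᴴ.mulVecLin)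
    rw [hbot, finrank_bot, add_zero, Module.finrank_fintype_fun_eq_card,
      Fintype.card_fin] at hrn
    rw [Matrix.rank] at hrank
    omega
  obtain ⟨w, hwmem, hw0⟩ := (Submodule.ne_bot_iff _).mp hker
  have hSw : Sᴴ *ᵥ w = 0 := hwmem
  set w' : EuclideanSpace 𝕜 (Fin n) := (WithLp.equiv 2 (Fin n → 𝕜)).symm w with hw'
  have hw'0 : w' ≠ 0 := by
    intro hcon
    apply hw0
    have := congrArg (WithLp.equiv 2 (Fin n → 𝕜)) hcon
    simpa [hw'] using this
  refine ⟨(‖w'‖⁻¹ : 𝕜) • w', norm_smul_inv_norm hw'0, ?_⟩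
  have : (WithLp.equiv 2 (Fin n → 𝕜)) ((‖w'‖⁻¹ : 𝕜) • w') = (‖w'‖⁻¹ : 𝕜) • w := by
    rw [hw']; rfl
  rw [this, Matrix.mulVec_smul, hSw, smul_zero]

end Helpers

/-- The Frobenius distance from `A` to the set of rank-deficient matrices equals the
smallest singular value of `A`. -/
theorem frobenius_dist_to_singular_eq_sigmaMin {𝕜 : Type*} [RCLike 𝕜] {n m : ℕ}
    (hn : 0 < n) (hnm : n ≤ m) (A : Matrix (Fin n) (Fin m) 𝕜) :
    sInf {r : ℝ | ∃ S : Matrix (Fin n) (Fin m) 𝕜, S.rank < n ∧ r = frobNorm (A - S)} =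
      sigmaMin A := by
  classical
  haveI : Nonempty (Fin n) := ⟨⟨0, hn⟩⟩
  set T := Matrix.toEuclideanLin Aᴴ with hT
  -- bddBelow of range for the infimum
  have hbdd : BddBelow (Set.range fun u : Metric.sphere (0 : EuclideanSpace 𝕜 (Fin n)) 1 =>
      ‖T (u : EuclideanSpace 𝕜 (Fin n))‖) := by
    refine ⟨0, ?_⟩
    rintro _ ⟨u, rfl⟩
    exact norm_nonneg _
  -- the minimum is attained
  obtain ⟨u₀, hu₀mem, hu₀min⟩ :
      ∃ u₀ ∈ Metric.sphere (0 : EuclideanSpace 𝕜 (Fin n)) 1,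
        ∀ y ∈ Metric.sphere (0 : EuclideanSpace 𝕜 (Fin n)) 1, ‖T u₀‖ ≤ ‖T y‖ := by
    have hcpt : IsCompact (Metric.sphere (0 : EuclideanSpace 𝕜 (Fin n)) 1) :=
      isCompact_sphere _ _
    have hne : (Metric.sphere (0 : EuclideanSpace 𝕜 (Fin n)) 1).Nonempty :=
      NormedSpace.sphere_nonempty.mpr zero_le_one
    obtain ⟨u₀, h1, h2⟩ := hcpt.exists_isMinOn hne
      (T.continuous_of_finiteDimensional.norm.continuousOn)
    exact ⟨u₀, h1, fun y hy => h2 hy⟩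
  have hu₀ : ‖u₀‖ = 1 := by
    simpa [mem_sphere_iff_norm] using hu₀mem
  haveI : Nonempty ↑(Metric.sphere (0 : EuclideanSpace 𝕜 (Fin n)) 1) := ⟨⟨u₀, hu₀mem⟩⟩
  have hσ : sigmaMin A = ‖T u₀‖ := by
    apply le_antisymm
    · exact ciInf_le hbdd ⟨u₀, hu₀mem⟩
    · exact le_ciInf fun y => hu₀min y y.2
  -- lower bound: every element of the set is ≥ sigmaMin A
  have hlb : ∀ r ∈ {r : ℝ | ∃ S : Matrix (Fin n) (Fin m) 𝕜,
      S.rank < n ∧ r = frobNorm (A - S)}, sigmaMin A ≤ r := by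
    rintro r ⟨S, hSrank, rfl⟩
    obtain ⟨u, hu1, huS⟩ := my_exists_unit_left_kernel hSrank
    have heq : T u = Matrix.toEuclideanLin (A - S)ᴴ u := by
      rw [hT, Matrix.toEuclideanLin_apply, Matrix.toEuclideanLin_apply]
      congr 1
      rw [Matrix.conjTranspose_sub, Matrix.sub_mulVec, show Sᴴ *ᵥ u.ofLp = 0 from huS, sub_zero]
    calc sigmaMin A ≤ ‖T u‖ :=
          ciInf_le hbdd ⟨u, by simpa [mem_sphere_iff_norm] using hu1⟩
      _ = ‖Matrix.toEuclideanLin (A - S)ᴴ u‖ := by rw [heq]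
      _ ≤ frobNorm (A - S) := my_norm_toEuclideanLin_le_frobNorm _ hu1
  -- the value sigmaMin A is attained in the set
  have hmem : sigmaMin A ∈ {r : ℝ | ∃ S : Matrix (Fin n) (Fin m) 𝕜,
      S.rank < n ∧ r = frobNorm (A - S)} := by
    set u' : Fin n → 𝕜 := (WithLp.equiv 2 (Fin n → 𝕜)) u₀ with hu'
    have hu'0 : u' ≠ 0 := by
      intro hcon
      have : u₀ = 0 := by
        have := congrArg (WithLp.equiv 2 (Fin n → 𝕜)).symm hcon
        simpa [hu'] using this
      rw [this] at hu₀
      simp at hu₀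
    have hsum1 : ∑ i, ‖u' i‖ ^ 2 = 1 := my_sum_sq_of_unit hu₀
    set v : Fin m → 𝕜 := Matrix.vecMul (star u') A with hv
    set S₀ : Matrix (Fin n) (Fin m) 𝕜 := A - Matrix.of (fun i j => u' i * v j) with hS₀
    have hvec : Matrix.vecMul (star u') S₀ = 0 := by
      funext j
      rw [hS₀, Matrix.vecMul_sub]
      have h2 : Matrix.vecMul (star u') (Matrix.of fun i j => u' i * v j) j = v j := by
        show ∑ i, star (u' i) * (u' i * v j) = v j
        have : ∑ i, star (u' i) * (u' i * v j) = (∑ i, star (u' i) * u' i) * v j := by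
          rw [Finset.sum_mul]
          refine Finset.sum_congr rfl fun i _ => by ring
        rw [this]
        have hone : (∑ i, star (u' i) * u' i) = (1 : 𝕜) := by
          have : ∀ i, star (u' i) * u' i = ((‖u' i‖ ^ 2 : ℝ) : 𝕜) := by
            intro i
            rw [RCLike.star_def, RCLike.conj_mul]
            norm_cast
          rw [Finset.sum_congr rfl fun i _ => this i, ← RCLike.ofReal_sum, hsum1]
          norm_cast
        rw [hone, one_mul]
      simp only [Pi.sub_apply, Pi.zero_apply, h2, ← hv, sub_self]
    have hrank : S₀.rank < n := my_rank_lt_of_vecMul_eq_zero hu'0 hvec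
    refine ⟨S₀, hrank, ?_⟩
    have hAS : A - S₀ = Matrix.of (fun i j => u' i * v j) := by
      rw [hS₀, sub_sub_cancel]
    rw [hAS, hσ, my_norm_toEuclideanLin, frobNorm]
    congr 1
    have hentry : ∀ (i : Fin n) (j : Fin m),
        ‖(Matrix.of (fun i j => u' i * v j)) i j‖ ^ 2 = ‖u' i‖ ^ 2 * ‖v j‖ ^ 2 := by
      intro i j
      show ‖u' i * v j‖ ^ 2 = _
      rw [norm_mul, mul_pow]
    have hAv : ∀ j, (Aᴴ *ᵥ u') j = star (v j) := by
      intro j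
      show ∑ i, Aᴴ j i * u' i = star (v j)
      rw [hv]
      show _ = star (∑ i, star (u' i) * A i j)
      rw [star_sum]
      refine Finset.sum_congr rfl fun i _ => ?_
      rw [StarMul.star_mul, star_star, Matrix.conjTranspose_apply]
    calc (∑ j, ‖(Aᴴ *ᵥ (WithLp.equiv 2 (Fin n → 𝕜)) u₀) j‖ ^ 2)
        = ∑ j, ‖v j‖ ^ 2 := by
          refine Finset.sum_congr rfl fun j _ => ?_
          rw [← hu', hAv j, norm_star]
      _ = (∑ i, ‖u' i‖ ^ 2) * (∑ j, ‖v j‖ ^ 2) := by rw [hsum1, one_mul]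
      _ = ∑ i, ∑ j, ‖(Matrix.of (fun i j => u' i * v j)) i j‖ ^ 2 := by
          rw [Finset.sum_mul_sum]
          refine Finset.sum_congr rfl fun i _ => Finset.sum_congr rfl fun j _ => ?_
          rw [hentry]
  have h0lb : ∀ r ∈ {r : ℝ | ∃ S : Matrix (Fin n) (Fin m) 𝕜,
      S.rank < n ∧ r = frobNorm (A - S)}, (0:ℝ) ≤ r := by
    rintro r ⟨S, _, rfl⟩
    exact Real.sqrt_nonneg _
  exact le_antisymm (csInf_le ⟨0, h0lb⟩ hmem) (le_csInf ⟨_, hmem⟩ hlb)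
end

section
/- For every A ∈ GL_{n,m} (full-rank n×m matrix, n ≤ m) and every B ∈ K^{n×m}, the second symmetric upper derivative of α(A) = σ_n(A)^{-2} at A in direction B satisfies limsup_{h→0} (σ_n(A+hB)^{-2} + σ_n(A−hB)^{-2} − 2σ_n(A)^{-2})/h² > −∞. -/
open scoped BigOperators
open Matrix
open scoped ComplexOrder

/-- tangent line inequality for `t ↦ (t^2)⁻¹`. -/
lemma aux_tangent (s t : ℝ) (hs : 0 < s) (ht : 0 < t) :
    (s ^ 2)⁻¹ - 2 / s ^ 3 * (t - s) ≤ (t ^ 2)⁻¹ := by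
  rw [← sub_nonneg]
  have key : (t ^ 2)⁻¹ - ((s ^ 2)⁻¹ - 2 / s ^ 3 * (t - s))
      = (t - s) ^ 2 * (2 * t + s) / (s ^ 3 * t ^ 2) := by
    field_simp
    ring
  rw [key]
  positivity

/-- parallelogram-type second-order upper bound. -/
lemma aux_para {𝕜 : Type*} [RCLike 𝕜] {F : Type*} [NormedAddCommGroup F]
    [InnerProductSpace 𝕜 F] (x y : F) (hx : 0 < ‖x‖) :
    ‖x + y‖ + ‖x - y‖ ≤ 2 * ‖x‖ + ‖y‖ ^ 2 / ‖x‖ := by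
  have hpar := parallelogram_law_with_norm 𝕜 x y
  set p := ‖x + y‖
  set q := ‖x - y‖
  have hp : 0 ≤ p := norm_nonneg _
  have hq : 0 ≤ q := norm_nonneg _
  have hy : 0 ≤ ‖y‖ := norm_nonneg _
  have hc : ‖y‖ ^ 2 / ‖x‖ * ‖x‖ = ‖y‖ ^ 2 := div_mul_cancel₀ _ (ne_of_gt hx)
  nlinarith [sq_nonneg (p - q), sq_nonneg (p + q - (2 * ‖x‖ + ‖y‖ ^ 2 / ‖x‖)),
    sq_nonneg (‖y‖ ^ 2 / ‖x‖), mul_pos hx hx]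

/-- For every full-rank `A` and every direction `B`, the second symmetric upper derivative of
`α(A) = σ_n(A)⁻²` at `A` in direction `B` is `> -∞`. -/
theorem secondSymDeriv_sigmaMin_inv_sq_gt_bot {𝕜 : Type*} [RCLike 𝕜] {n m : ℕ}
    (hnm : n ≤ m) (A B : Matrix (Fin n) (Fin m) 𝕜) (hA : A.rank = n) :
    (⊥ : EReal) < Filter.limsup
      (fun h : ℝ =>
        (((((sigmaMin (A + h • B)) ^ 2)⁻¹ + ((sigmaMin (A - h • B)) ^ 2)⁻¹
            - 2 * ((sigmaMin A) ^ 2)⁻¹) / h ^ 2 : ℝ) : EReal))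
      (nhdsWithin (0 : ℝ) {0}ᶜ) := by
  have hNB : (nhdsWithin (0 : ℝ) {0}ᶜ).NeBot := inferInstance
  suffices hsuf : ∃ c : ℝ, ∀ᶠ h in nhdsWithin (0 : ℝ) {0}ᶜ,
      (c : EReal) ≤ ((((sigmaMin (A + h • B)) ^ 2)⁻¹ + ((sigmaMin (A - h • B)) ^ 2)⁻¹
            - 2 * ((sigmaMin A) ^ 2)⁻¹) / h ^ 2 : ℝ) by
    obtain ⟨c, hc⟩ := hsuf
    exact lt_of_lt_of_le (EReal.bot_lt_coe c)
      (Filter.le_limsup_of_frequently_le' hc.frequently)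
  rcases Nat.eq_zero_or_pos n with rfl | hn
  · -- degenerate case n = 0
    refine ⟨0, Filter.Eventually.of_forall fun h => ?_⟩
    haveI : IsEmpty (Metric.sphere (0 : EuclideanSpace 𝕜 (Fin 0)) 1) := by
      constructor
      rintro ⟨u, hu⟩
      have hu0 : u = 0 := Subsingleton.elim _ _
      rw [Metric.mem_sphere, hu0, dist_self] at hu
      norm_num at hu
    have hz : ∀ X : Matrix (Fin 0) (Fin m) 𝕜, sigmaMin X = 0 := fun X =>
      Real.iInf_of_isEmpty _
    simp [hz]
  · -- main case
    haveI : Nonempty (Fin n) := ⟨⟨0, hn⟩⟩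
    set E := EuclideanSpace 𝕜 (Fin n)
    set F := EuclideanSpace 𝕜 (Fin m)
    haveI : Nontrivial E := by
      unfold E
      infer_instance
    haveI hsne : Nonempty (Metric.sphere (0 : E) 1) :=
      (NormedSpace.sphere_nonempty.2 zero_le_one).coe_sort
    set a : E →ₗ[𝕜] F := Matrix.toEuclideanLin Aᴴ with ha_def
    set b : E →ₗ[𝕜] F := Matrix.toEuclideanLin Bᴴ with hb_def
    -- the key linear expansion
    have key : ∀ (h : ℝ) (u : E),
        Matrix.toEuclideanLin (A + h • B)ᴴ u = a u + h • b u := by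
      intro h u
      have h1 : (A + h • B)ᴴ = Aᴴ + (h : 𝕜) • Bᴴ := by
        rw [conjTranspose_add]
        congr 1
        rw [RCLike.real_smul_eq_coe_smul (K := 𝕜), conjTranspose_smul, RCLike.star_def,
          RCLike.conj_ofReal]
      rw [h1, map_add, _root_.map_smul, LinearMap.add_apply, LinearMap.smul_apply,
        RCLike.real_smul_eq_coe_smul (K := 𝕜)]
    have sigma_eq : ∀ h : ℝ, sigmaMin (A + h • B)
        = ⨅ u : Metric.sphere (0 : E) 1, ‖a u + h • b u‖ := by
      intro h
      unfold sigmaMin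
      exact iInf_congr fun u => by rw [key]
    -- bddBelow
    have hbdd : ∀ f : Metric.sphere (0 : E) 1 → F,
        BddBelow (Set.range fun u => ‖f u‖) := fun f =>
      ⟨0, by rintro x ⟨u, rfl⟩; exact norm_nonneg _⟩
    set s := sigmaMin A with hs_def
    have hsA : s = ⨅ u : Metric.sphere (0 : E) 1, ‖a u‖ := rfl
    have hs_le : ∀ u : Metric.sphere (0 : E) 1, s ≤ ‖a u‖ := by
      intro u
      rw [hsA]
      exact ciInf_le (hbdd _) u
    -- injectivity of a
    have hmul_inj : Function.Injective Aᴴ.mulVecLin := by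
      rw [← LinearMap.ker_eq_bot]
      have h1 := Aᴴ.mulVecLin.finrank_range_add_finrank_ker
      have h2 : Module.finrank 𝕜 (LinearMap.range Aᴴ.mulVecLin) = n := by
        have hr : Aᴴ.rank = n := by rw [Matrix.rank_conjTranspose, hA]
        simpa [Matrix.rank] using hr
      have h3 : Module.finrank 𝕜 (Fin n → 𝕜) = n := by simp
      rw [h2, h3] at h1
      have h4 : Module.finrank 𝕜 (LinearMap.ker Aᴴ.mulVecLin) = 0 := by omega
      exact Submodule.finrank_eq_zero.mp h4
    have ha_inj : Function.Injective a := by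
      intro u v huv
      rw [ha_def, Matrix.toEuclideanLin_apply, Matrix.toEuclideanLin_apply] at huv
      have h5 := (WithLp.equiv 2 (Fin m → 𝕜)).symm.injective huv
      have h6 : Aᴴ.mulVecLin ((WithLp.equiv 2 (Fin n → 𝕜)) u)
          = Aᴴ.mulVecLin ((WithLp.equiv 2 (Fin n → 𝕜)) v) := by
        simpa [Matrix.mulVecLin_apply] using h5
      exact (WithLp.equiv 2 (Fin n → 𝕜)).injective (hmul_inj h6)
    -- minimizer
    obtain ⟨u0, hu0mem, hu0⟩ := (isCompact_sphere (0 : E) 1).exists_isMinOn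
      (NormedSpace.sphere_nonempty.2 zero_le_one)
      ((continuous_norm.comp a.continuous_of_finiteDimensional).continuousOn)
    have hs_min : ‖a u0‖ = s := by
      refine le_antisymm ?_ (hs_le ⟨u0, hu0mem⟩)
      rw [hsA]
      exact le_ciInf fun u => hu0 u.2
    have hs_pos : 0 < s := by
      rw [← hs_min, norm_pos_iff]
      intro hc
      have h8 : u0 = 0 := ha_inj (by rw [hc, map_zero])
      rw [mem_sphere_iff_norm, h8, sub_zero, norm_zero] at hu0mem
      norm_num at hu0mem
    -- operator norm bound
    set b' : E →L[𝕜] F := LinearMap.toContinuousLinearMap b with hb'_def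
    set L : ℝ := ‖b'‖ with hL_def
    have hL0 : 0 ≤ L := norm_nonneg _
    have hbu : ∀ u : Metric.sphere (0 : E) 1, ‖b u‖ ≤ L := by
      intro u
      have h1 : ‖b' u‖ ≤ L * ‖(u : E)‖ := b'.le_opNorm _
      have h2 : ‖(u : E)‖ = 1 := by
        have hmem := u.2
        rwa [mem_sphere_iff_norm, sub_zero] at hmem
      rw [h2, mul_one] at h1
      simpa [hb'_def, LinearMap.coe_toContinuousLinearMap'] using h1
    -- lower (Lipschitz) bound
    have glb : ∀ h : ℝ, s - |h| * L ≤ sigmaMin (A + h • B) := by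
      intro h
      rw [sigma_eq]
      refine le_ciInf fun u => ?_
      have h1 : ‖a u‖ ≤ ‖a u + h • b u‖ + ‖h • b u‖ := by
        calc ‖a u‖ = ‖(a u + h • b u) - h • b u‖ := by rw [add_sub_cancel_right]
          _ ≤ _ := norm_sub_le _ _
      have h2 : ‖h • b u‖ ≤ |h| * L := by
        rw [norm_smul, Real.norm_eq_abs]
        exact mul_le_mul_of_nonneg_left (hbu u) (abs_nonneg h)
      have h3 := hs_le u
      linarith
    -- upper (semiconcavity) bound
    have gsum : ∀ h : ℝ, sigmaMin (A + h • B) + sigmaMin (A + (-h) • B)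
        ≤ 2 * s + h ^ 2 * L ^ 2 / s := by
      intro h
      have hx : 0 < ‖a u0‖ := by rw [hs_min]; exact hs_pos
      have h1 : sigmaMin (A + h • B) ≤ ‖a u0 + h • b u0‖ := by
        rw [sigma_eq]
        exact ciInf_le (hbdd _) ⟨u0, hu0mem⟩
      have h2 : sigmaMin (A + (-h) • B) ≤ ‖a u0 - h • b u0‖ := by
        rw [sigma_eq]
        have he : a u0 + (-h) • b u0 = a u0 - h • b u0 := by
          rw [neg_smul, ← sub_eq_add_neg]
        refine le_trans (ciInf_le (hbdd _) ⟨u0, hu0mem⟩) (le_of_eq ?_)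
        rw [he]
      have h3 := aux_para (𝕜 := 𝕜) (a u0) (h • b u0) hx
      have h4 : ‖h • b u0‖ ^ 2 ≤ h ^ 2 * L ^ 2 := by
        rw [norm_smul, Real.norm_eq_abs, mul_pow, sq_abs]
        exact mul_le_mul_of_nonneg_left
          (pow_le_pow_left₀ (norm_nonneg _) (hbu ⟨u0, hu0mem⟩) 2) (sq_nonneg h)
      have h5 : ‖h • b u0‖ ^ 2 / s ≤ h ^ 2 * L ^ 2 / s :=
        div_le_div_of_nonneg_right h4 hs_pos.le
      rw [hs_min] at h3
      linarith
    -- final assembly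
    refine ⟨-(2 * L ^ 2 / s ^ 4), ?_⟩
    have hδ : 0 < s / (2 * (L + 1)) := by positivity
    have hev : ∀ᶠ h : ℝ in nhdsWithin 0 {0}ᶜ, |h| < s / (2 * (L + 1)) ∧ h ≠ 0 := by
      have h1 : ∀ᶠ h : ℝ in nhdsWithin (0:ℝ) {0}ᶜ, |h| < s / (2 * (L + 1)) := by
        apply Filter.Eventually.filter_mono nhdsWithin_le_nhds
        filter_upwards [Metric.ball_mem_nhds (0 : ℝ) hδ] with x hx
        simpa [Real.dist_eq] using hx
      have h2 : ∀ᶠ h : ℝ in nhdsWithin (0:ℝ) {0}ᶜ, h ≠ 0 :=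
        eventually_mem_nhdsWithin.mono fun x hx => hx
      exact h1.and h2
    filter_upwards [hev] with h hh
    obtain ⟨hhδ, hh0⟩ := hh
    clear_value s L
    have hh2 : (0:ℝ) < h ^ 2 := by
      have : h ^ 2 = |h| ^ 2 := (sq_abs h).symm
      rw [this]
      exact pow_pos (abs_pos.mpr hh0) 2
    have hhL : |h| * L < s / 2 := by
      have hstep : |h| * (2 * (L + 1)) < s := (lt_div_iff₀ (by positivity)).mp hhδ
      have habs : (0:ℝ) ≤ |h| := abs_nonneg h
      linarith only [hstep, habs, hL0]
    have hsub : A - h • B = A + (-h) • B := by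
      rw [neg_smul, ← sub_eq_add_neg]
    set t1 := sigmaMin (A + h • B) with ht1
    have ht1pos : 0 < t1 := by
      have hg := glb h
      rw [← ht1] at hg
      linarith
    set t2 := sigmaMin (A + (-h) • B) with ht2
    have ht2pos : 0 < t2 := by
      have hg := glb (-h)
      rw [abs_neg, ← ht2] at hg
      linarith
    have hgs2 : t1 + t2 ≤ 2 * s + h ^ 2 * L ^ 2 / s := by
      have hg := gsum h
      rw [← ht1, ← ht2] at hg
      exact hg
    clear_value t1 t2
    have htan1 := aux_tangent s t1 hs_pos ht1pos
    have htan2 := aux_tangent s t2 hs_pos ht2pos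
    rw [hsub, ← ht2]
    refine EReal.coe_le_coe_iff.mpr ?_
    rw [le_div_iff₀ hh2]
    have hpos : (0:ℝ) < 2 / s ^ 3 := by positivity
    have m1 : 2 / s ^ 3 * (t1 - s) + 2 / s ^ 3 * (t2 - s) ≤ 2 / s ^ 3 * (h ^ 2 * L ^ 2 / s) := by
      have := mul_le_mul_of_nonneg_left (show t1 + t2 - 2*s ≤ h ^ 2 * L ^ 2 / s by linarith only [hgs2])
        (le_of_lt hpos)
      linarith only [this]
    have e : 2 / s ^ 3 * (h ^ 2 * L ^ 2 / s) = 2 * L ^ 2 / s ^ 4 * h ^ 2 := by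
      field_simp
    linarith only [htan1, htan2, m1, e]
end

section
/- For A ∈ K^{n×m} with n ≤ m, A_h = A + hB, and any B, one has σ_n(A_h)^{-2} + σ_n(A_{−h})^{-2} ≥ 2 λ_n(AA* + h²BB*)^{-1}, where λ_n denotes the smallest eigenvalue. -/
open scoped BigOperators ENNReal
open Matrix

/-- The smallest eigenvalue `λ_n(S) = inf_{‖u‖ = 1} u* S u` of a Hermitian matrix. -/
noncomputable def lambdaMin {𝕜 : Type*} [RCLike 𝕜] {n : ℕ} (S : Matrix (Fin n) (Fin n) 𝕜) : ℝ :=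
  ⨅ u : Metric.sphere (0 : EuclideanSpace 𝕜 (Fin n)) 1,
    RCLike.re (inner 𝕜 (u : EuclideanSpace 𝕜 (Fin n))
      (Matrix.toEuclideanLin S (u : EuclideanSpace 𝕜 (Fin n))) : 𝕜)

/-- AM-HM inequality for two nonnegative reals, in `ℝ≥0∞`. -/
lemma ennreal_amhm {x y : ℝ} (hx : 0 ≤ x) (hy : 0 ≤ y) :
    2 * (ENNReal.ofReal ((x + y) / 2))⁻¹ ≤ (ENNReal.ofReal x)⁻¹ + (ENNReal.ofReal y)⁻¹ := by
  rcases hx.eq_or_lt with hx0 | hx0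
  · simp [← hx0]
  rcases hy.eq_or_lt with hy0 | hy0
  · simp [← hy0]
  have hxy : 0 < (x + y) / 2 := by positivity
  rw [← ENNReal.ofReal_inv_of_pos hxy, ← ENNReal.ofReal_inv_of_pos hx0,
    ← ENNReal.ofReal_inv_of_pos hy0, ← ENNReal.ofReal_add (by positivity) (by positivity),
    show (2 : ℝ≥0∞) = ENNReal.ofReal 2 by norm_num,
    ← ENNReal.ofReal_mul (by norm_num)]
  apply ENNReal.ofReal_le_ofReal
  rw [inv_div, inv_eq_one_div, inv_eq_one_div, div_add_div _ _ (ne_of_gt hx0) (ne_of_gt hy0),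
    ← mul_div_assoc, div_le_div_iff₀ (by positivity) (by positivity)]
  nlinarith [sq_nonneg (x - y)]

/-- `re ⟪u, (M Mᴴ) u⟫ = ‖Mᴴ u‖ ^ 2`. -/
lemma re_inner_mul_conjTranspose {𝕜 : Type*} [RCLike 𝕜] {n m : ℕ}
    (M : Matrix (Fin n) (Fin m) 𝕜) (u : EuclideanSpace 𝕜 (Fin n)) :
    RCLike.re (inner 𝕜 u (Matrix.toEuclideanLin (M * Mᴴ) u) : 𝕜) =
      ‖Matrix.toEuclideanLin Mᴴ u‖ ^ 2 := by
  have hcomp : Matrix.toEuclideanLin (M * Mᴴ) u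
      = Matrix.toEuclideanLin M (Matrix.toEuclideanLin Mᴴ u) := by
    simp [Matrix.toEuclideanLin_apply, Matrix.mulVec_mulVec]
  have hadj : Matrix.toEuclideanLin M = LinearMap.adjoint (Matrix.toEuclideanLin Mᴴ) := by
    rw [← Matrix.toEuclideanLin_conjTranspose_eq_adjoint, Matrix.conjTranspose_conjTranspose]
  rw [hcomp, hadj, LinearMap.adjoint_inner_right, ← @inner_self_eq_norm_sq 𝕜]

set_option maxHeartbeats 1000000 in
/-- For `A_h = A + hB`, one has
`σ_n(A_h)⁻² + σ_n(A_{-h})⁻² ≥ 2 λ_n(AA* + h²BB*)⁻¹` (computed in `ℝ≥0∞`, so that the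
inverse of `0` is `∞`). -/
theorem sigmaMin_inv_sq_add_ge {𝕜 : Type*} [RCLike 𝕜] {n m : ℕ} (hnm : n ≤ m)
    (A B : Matrix (Fin n) (Fin m) 𝕜) (h : ℝ) :
    2 * (ENNReal.ofReal (lambdaMin (A * Aᴴ + (h ^ 2) • (B * Bᴴ))))⁻¹ ≤
      (ENNReal.ofReal ((sigmaMin (A + h • B)) ^ 2))⁻¹ +
        (ENNReal.ofReal ((sigmaMin (A - h • B)) ^ 2))⁻¹ := by
  classical
  by_cases hn : n = 0
  · subst hn
    haveI : IsEmpty (Metric.sphere (0 : EuclideanSpace 𝕜 (Fin 0)) 1) := by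
      constructor
      rintro ⟨u, hu⟩
      rw [mem_sphere_iff_norm, Subsingleton.elim u 0] at hu
      simp at hu
    rw [lambdaMin, sigmaMin, sigmaMin, Real.iInf_of_isEmpty, Real.iInf_of_isEmpty,
      Real.iInf_of_isEmpty]
    simp
  · have hpos : 0 < n := Nat.pos_of_ne_zero hn
    -- the sphere is nonempty
    have hne : (Metric.sphere (0 : EuclideanSpace 𝕜 (Fin n)) 1).Nonempty := by
      refine ⟨EuclideanSpace.single (⟨0, hpos⟩ : Fin n) (1 : 𝕜), ?_⟩
      simp [mem_sphere_iff_norm, EuclideanSpace.norm_single]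
    haveI : Nonempty (Metric.sphere (0 : EuclideanSpace 𝕜 (Fin n)) 1) := hne.to_subtype
    set S := A * Aᴴ + (h ^ 2) • (B * Bᴴ) with hS
    set f : EuclideanSpace 𝕜 (Fin n) → ℝ :=
      fun u => RCLike.re (inner 𝕜 u (Matrix.toEuclideanLin S u) : 𝕜) with hf
    have hfc : Continuous f := by
      apply RCLike.continuous_re.comp
      exact continuous_id.inner (Matrix.toEuclideanLin S).continuous_of_finiteDimensional
    obtain ⟨u₀, hu₀s, hmin⟩ :=
      (isCompact_sphere (0 : EuclideanSpace 𝕜 (Fin n)) 1).exists_isMinOn hne hfc.continuousOn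
    set v := Matrix.toEuclideanLin Aᴴ u₀ with hv
    set w := Matrix.toEuclideanLin Bᴴ u₀ with hw
    -- rewriting the real smul as a 𝕜 smul
    have hsm : h • B = ((h : 𝕜)) • B := RCLike.real_smul_eq_coe_smul h B
    have hsm2 : (h ^ 2) • (B * Bᴴ) = (((h : 𝕜)) ^ 2) • (B * Bᴴ) := by
      rw [RCLike.real_smul_eq_coe_smul (K := 𝕜) (h ^ 2), RCLike.ofReal_pow]
    have hBH : ((h : 𝕜) • B)ᴴ = (h : 𝕜) • Bᴴ := by
      rw [Matrix.conjTranspose_smul, RCLike.star_def, RCLike.conj_ofReal]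
    have hplus : Matrix.toEuclideanLin (A + h • B)ᴴ u₀ = v + (h : 𝕜) • w := by
      rw [hsm, Matrix.conjTranspose_add, hBH, map_add, _root_.map_smul]
      rfl
    have hminus : Matrix.toEuclideanLin (A - h • B)ᴴ u₀ = v - (h : 𝕜) • w := by
      rw [hsm, Matrix.conjTranspose_sub, hBH, map_sub, _root_.map_smul]
      rfl
    set a := ‖v + (h : 𝕜) • w‖ with ha
    set b := ‖v - (h : 𝕜) • w‖ with hb
    -- the parallelogram identity
    have hpar : a ^ 2 + b ^ 2 = 2 * f u₀ := by
      have h1 : a * a + b * b = 2 * (‖v‖ * ‖v‖ + ‖(h : 𝕜) • w‖ * ‖(h : 𝕜) • w‖) :=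
        by have := parallelogram_law_with_norm 𝕜 v ((h : 𝕜) • w); simp only [sq] at this; exact this
      have h2 : f u₀ = ‖v‖ ^ 2 + h ^ 2 * ‖w‖ ^ 2 := by
        have e1 : (Matrix.toEuclideanLin S) u₀ = (Matrix.toEuclideanLin (A * Aᴴ)) u₀ +
            ((h : 𝕜) ^ 2) • (Matrix.toEuclideanLin (B * Bᴴ)) u₀ := by
          rw [hS, hsm2, map_add, _root_.map_smul]
          rfl
        show RCLike.re (inner 𝕜 u₀ ((Matrix.toEuclideanLin S) u₀) : 𝕜) = _
        rw [e1, inner_add_right, inner_smul_right, map_add, re_inner_mul_conjTranspose A u₀,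
          ← RCLike.ofReal_pow, RCLike.re_ofReal_mul, re_inner_mul_conjTranspose B u₀]
      have h3 : ‖(h : 𝕜) • w‖ ^ 2 = h ^ 2 * ‖w‖ ^ 2 := by
        rw [norm_smul, RCLike.norm_ofReal, mul_pow, sq_abs]
      calc a ^ 2 + b ^ 2 = a * a + b * b := by ring
        _ = 2 * (‖v‖ * ‖v‖ + ‖(h : 𝕜) • w‖ * ‖(h : 𝕜) • w‖) := h1
        _ = 2 * (‖v‖ ^ 2 + ‖(h : 𝕜) • w‖ ^ 2) := by ring
        _ = 2 * (‖v‖ ^ 2 + h ^ 2 * ‖w‖ ^ 2) := by rw [h3]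
        _ = 2 * f u₀ := by rw [h2]
    -- bounds on sigmaMin
    have hbdd : ∀ (C : Matrix (Fin n) (Fin m) 𝕜), BddBelow (Set.range fun
        u : Metric.sphere (0 : EuclideanSpace 𝕜 (Fin n)) 1 =>
        ‖Matrix.toEuclideanLin Cᴴ (u : EuclideanSpace 𝕜 (Fin n))‖) := by
      intro C
      exact ⟨0, by rintro x ⟨i, rfl⟩; exact norm_nonneg _⟩
    have hσp_nonneg : 0 ≤ sigmaMin (A + h • B) := by
      unfold sigmaMin; exact le_ciInf fun u => norm_nonneg _
    have hσm_nonneg : 0 ≤ sigmaMin (A - h • B) := by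
      unfold sigmaMin; exact le_ciInf fun u => norm_nonneg _
    have hσp_le : sigmaMin (A + h • B) ≤ a := by
      rw [ha, ← hplus]
      unfold sigmaMin
      exact ciInf_le (hbdd _) ⟨u₀, hu₀s⟩
    have hσm_le : sigmaMin (A - h • B) ≤ b := by
      rw [hb, ← hminus]
      unfold sigmaMin
      exact ciInf_le (hbdd _) ⟨u₀, hu₀s⟩
    have hlam_ge : f u₀ ≤ lambdaMin S := by
      unfold lambdaMin
      exact le_ciInf fun u => hmin u.2
    -- chain of inequalities in ℝ≥0∞
    calc 2 * (ENNReal.ofReal (lambdaMin S))⁻¹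
        ≤ 2 * (ENNReal.ofReal (f u₀))⁻¹ :=
          mul_le_mul_right (ENNReal.inv_le_inv' (ENNReal.ofReal_le_ofReal hlam_ge)) 2
      _ = 2 * (ENNReal.ofReal ((a ^ 2 + b ^ 2) / 2))⁻¹ := by
          rw [show f u₀ = (a ^ 2 + b ^ 2) / 2 by linarith]
      _ ≤ (ENNReal.ofReal (a ^ 2))⁻¹ + (ENNReal.ofReal (b ^ 2))⁻¹ :=
          ennreal_amhm (by positivity) (by positivity)
      _ ≤ (ENNReal.ofReal ((sigmaMin (A + h • B)) ^ 2))⁻¹ +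
            (ENNReal.ofReal ((sigmaMin (A - h • B)) ^ 2))⁻¹ := by
          have e1 : ENNReal.ofReal ((sigmaMin (A + h • B)) ^ 2) ≤ ENNReal.ofReal (a ^ 2) :=
            ENNReal.ofReal_le_ofReal (by nlinarith)
          have e2 : ENNReal.ofReal ((sigmaMin (A - h • B)) ^ 2) ≤ ENNReal.ofReal (b ^ 2) :=
            ENNReal.ofReal_le_ofReal (by nlinarith)
          exact add_le_add (ENNReal.inv_le_inv' e1) (ENNReal.inv_le_inv' e2)
end

section
/- Let f : ℝ → ℝ^n be locally integrable and let x be a Lebesgue point of f (i.e., a point where an antiderivative F of f satisfies F'(x) = f(x)). Then lim_{ε→0} (2/ε²) ∫_x^{x+ε} (y−x) f(y) dy = f(x). -/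
open MeasureTheory intervalIntegral

-- Fubini on the triangle
lemma tri_fubini {E : Type*} [NormedAddCommGroup E] [NormedSpace ℝ E] [CompleteSpace E]
    {f : ℝ → E} {a b : ℝ} (hab : a ≤ b) (hf : IntegrableOn f (Set.Ioc a b)) :
    ∫ y in Set.Ioc a b, (y - a) • f y = ∫ t in Set.Ioc a b, ∫ y in Set.Ioc t b, f y := by
  set μ := volume.restrict (Set.Ioc a b) with hμdef
  haveI : IsFiniteMeasure μ := by
    constructor
    rw [hμdef, Measure.restrict_apply_univ, Real.volume_Ioc]
    exact ENNReal.ofReal_lt_top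
  have hfsnd : Integrable (fun p : ℝ × ℝ => f p.2) (μ.prod μ) := by
    have h1 : Integrable f (Measure.map Prod.snd (μ.prod μ)) := by
      rw [Measure.map_snd_prod]
      exact hf.smul_measure (measure_lt_top μ _).ne
    exact h1.comp_measurable measurable_snd
  have hg : Integrable (Function.uncurry fun t y : ℝ => if t < y then f y else 0) (μ.prod μ) := by
    have heq : (Function.uncurry fun t y : ℝ => if t < y then f y else 0)
        = Set.indicator {p : ℝ × ℝ | p.1 < p.2} (fun p => f p.2) := by
      ext p
      by_cases h : p.1 < p.2 <;> simp [Function.uncurry, Set.indicator, h]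
    rw [heq]
    exact hfsnd.indicator (measurableSet_lt measurable_fst measurable_snd)
  have swap := integral_integral_swap hg
  have hR : ∫ y, (∫ t, (if t < y then f y else 0) ∂μ) ∂μ = ∫ y in Set.Ioc a b, (y - a) • f y := by
    rw [hμdef]
    refine setIntegral_congr_fun measurableSet_Ioc (fun y hy => ?_)
    have h1 : (fun t => if t < y then f y else 0) = (Set.Iio y).indicator (fun _ => f y) := by
      ext t; simp [Set.indicator]
    rw [h1, setIntegral_indicator measurableSet_Iio]
    have h2 : Set.Ioc a b ∩ Set.Iio y = Set.Ioo a y := by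
      ext z
      simp only [Set.mem_inter_iff, Set.mem_Ioc, Set.mem_Iio, Set.mem_Ioo]
      constructor
      · rintro ⟨⟨hz1, hz2⟩, hz3⟩; exact ⟨hz1, hz3⟩
      · rintro ⟨hz1, hz2⟩; exact ⟨⟨hz1, le_trans hz2.le hy.2⟩, hz2⟩
    rw [h2, setIntegral_const, Real.volume_real_Ioo, max_eq_left (by linarith [hy.1])]
  have hL : ∫ t, (∫ y, (if t < y then f y else 0) ∂μ) ∂μ
      = ∫ t in Set.Ioc a b, ∫ y in Set.Ioc t b, f y := by
    rw [hμdef]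
    refine setIntegral_congr_fun measurableSet_Ioc (fun t ht => ?_)
    have h1 : (fun y => if t < y then f y else 0) = (Set.Ioi t).indicator f := by
      ext y; simp [Set.indicator]
    have hset : Set.Ioc a b ∩ Set.Ioi t = Set.Ioc t b := by
      ext z
      simp only [Set.mem_inter_iff, Set.mem_Ioc, Set.mem_Ioi]
      constructor
      · rintro ⟨⟨hz1, hz2⟩, hz3⟩; exact ⟨hz3, hz2⟩
      · rintro ⟨hz1, hz2⟩; exact ⟨⟨lt_trans ht.1 hz1, hz2⟩, hz1⟩
    rw [h1, setIntegral_indicator measurableSet_Ioi, hset]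
  rw [← hR, ← hL]
  exact swap.symm

-- key integration-by-parts identity
lemma key_id {E : Type*} [NormedAddCommGroup E] [NormedSpace ℝ E] [CompleteSpace E]
    (f F : ℝ → E) (hint : ∀ a b : ℝ, IntervalIntegrable f volume a b)
    (hFc : Continuous F) (hF : ∀ a b : ℝ, F b - F a = ∫ y in a..b, f y) (x ε : ℝ) :
    (∫ y in x..(x + ε), (y - x) • f y)
      = ε • (F (x + ε) - F x) - ∫ y in x..(x + ε), (F y - F x) := by
  rcases le_or_gt 0 ε with hε | hε
  · have hab : x ≤ x + ε := by linarith
    have tri := tri_fubini hab (hint x (x + ε)).1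
    rw [integral_of_le hab, tri]
    have h1 : ∫ t in Set.Ioc x (x + ε), (∫ y in Set.Ioc t (x + ε), f y)
        = ∫ t in Set.Ioc x (x + ε), (F (x + ε) - F t) := by
      refine setIntegral_congr_fun measurableSet_Ioc (fun t ht => ?_)
      rw [hF t (x + ε), integral_of_le ht.2]
    rw [h1, ← integral_of_le hab]
    have h2 : ∀ t : ℝ, F (x + ε) - F t = (F (x + ε) - F x) - (F t - F x) := fun t => by abel
    rw [integral_congr (fun t _ => h2 t)]
    rw [intervalIntegral.integral_sub intervalIntegrable_const
      (show IntervalIntegrable (fun t => F t - F x) volume _ _ from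
        (hFc.sub continuous_const).intervalIntegrable _ _), intervalIntegral.integral_const]
    congr 2
    ring
  · have hab : x + ε ≤ x := by linarith
    have hfI : IntegrableOn f (Set.Ioc (x + ε) x) := (hint (x + ε) x).1
    have tri := tri_fubini hab hfI
    have hsmul : IntegrableOn (fun y => (y - (x + ε)) • f y) (Set.Ioc (x + ε) x) := by
      refine IntegrableOn.mono_set ?_ Set.Ioc_subset_Icc_self
      refine IntegrableOn.continuousOn_smul ?_ (by fun_prop) isCompact_Icc
      exact (integrableOn_Icc_iff_integrableOn_Ioc).mpr hfI
    rw [integral_symm (x + ε) x, integral_symm (x + ε) x]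
    simp only [integral_of_le hab]
    have e1 : ∫ y in Set.Ioc (x + ε) x, (y - x) • f y
        = (∫ y in Set.Ioc (x + ε) x, (y - (x + ε)) • f y) + ε • (F x - F (x + ε)) := by
      have hsm2 : IntegrableOn (fun y => ε • f y) (Set.Ioc (x + ε) x) volume := hfI.smul ε
      rw [hF (x + ε) x, integral_of_le hab, ← MeasureTheory.integral_smul,
        ← MeasureTheory.integral_add hsmul hsm2]
      refine setIntegral_congr_fun measurableSet_Ioc (fun y hy => ?_)
      rw [← add_smul]
      congr 1
      ring
    have h1 : ∫ t in Set.Ioc (x + ε) x, (∫ y in Set.Ioc t x, f y)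
        = ∫ t in Set.Ioc (x + ε) x, (F x - F t) := by
      refine setIntegral_congr_fun measurableSet_Ioc (fun t ht => ?_)
      rw [hF t x, integral_of_le ht.2]
    have e2 : ∫ y in Set.Ioc (x + ε) x, (F y - F x)
        = -(∫ t in Set.Ioc (x + ε) x, (F x - F t)) := by
      rw [← MeasureTheory.integral_neg]
      refine setIntegral_congr_fun measurableSet_Ioc (fun y hy => ?_)
      abel
    rw [e1, tri, h1, e2, smul_sub, smul_sub]
    abel

/-- Lemma 5.3 of the paper: if `x` is a point where an antiderivative `F` of a locally
integrable `f : ℝ → ℝⁿ` is differentiable with `F'(x) = f(x)`, then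
`lim_{ε→0} (2/ε²) ∫_x^{x+ε} (y−x) f(y) dy = f(x)`. -/
theorem lim_weighted_average_eq {n : ℕ} (f F : ℝ → EuclideanSpace ℝ (Fin n)) (x : ℝ)
    (hf : LocallyIntegrable f volume)
    (hF : ∀ a b : ℝ, F b - F a = ∫ y in a..b, f y)
    (hx : HasDerivAt F (f x) x) :
    Filter.Tendsto (fun ε : ℝ => (2 / ε ^ 2) • ∫ y in x..(x + ε), (y - x) • f y)
      (nhdsWithin (0 : ℝ) {0}ᶜ) (nhds (f x)) := by
  have hint : ∀ a b : ℝ, IntervalIntegrable f volume a b := fun a b =>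
    ⟨(hf.integrableOn_isCompact isCompact_Icc).mono_set Set.Ioc_subset_Icc_self,
     (hf.integrableOn_isCompact isCompact_Icc).mono_set Set.Ioc_subset_Icc_self⟩
  have hFeq : ∀ t : ℝ, F t = (∫ y in x..t, f y) + F x := fun t =>
    sub_eq_iff_eq_add.mp (hF x t)
  have hFc : Continuous F := by
    have h : Continuous fun t : ℝ => (∫ y in x..t, f y) + F x :=
      (intervalIntegral.continuous_primitive hint x).add continuous_const
    convert h using 1
    exact funext hFeq
  set G : ℝ → EuclideanSpace ℝ (Fin n) := fun y => F y - F x - (y - x) • f x with hG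
  have hGc : Continuous G :=
    (hFc.sub continuous_const).sub ((continuous_id.sub continuous_const).smul continuous_const)
  have hkey : ∀ ε : ℝ, ε ≠ 0 →
      (2 / ε ^ 2) • ∫ y in x..(x + ε), (y - x) • f y
        = (2 / ε) • (F (x + ε) - F x) - (2 / ε ^ 2) • (∫ y in x..(x + ε), G y) - f x := by
    intro ε hε
    rw [key_id f F hint hFc hF x ε]
    have hsplit : ∫ y in x..(x + ε), (F y - F x)
        = (∫ y in x..(x + ε), G y) + (ε ^ 2 / 2) • f x := by
      have h1 : ∀ y, F y - F x = G y + (y - x) • f x := fun y => by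
        simp only [hG]; abel
      rw [integral_congr (fun y _ => h1 y)]
      rw [intervalIntegral.integral_add (hGc.intervalIntegrable _ _)
        (Continuous.intervalIntegrable (by fun_prop) _ _)]
      congr 1
      rw [intervalIntegral.integral_smul_const]
      congr 1
      rw [intervalIntegral.integral_sub intervalIntegral.intervalIntegrable_id
        intervalIntegrable_const, integral_id, intervalIntegral.integral_const]
      simp only [smul_eq_mul]
      ring
    rw [hsplit, smul_sub, smul_add, smul_smul, smul_smul]
    have h2 : 2 / ε ^ 2 * (ε ^ 2 / 2) = 1 := by field_simp
    have h3 : 2 / ε ^ 2 * ε = 2 / ε := by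
      field_simp
    rw [h2, h3, one_smul]
    abel
  have lim1 : Filter.Tendsto (fun ε : ℝ => (2 / ε) • (F (x + ε) - F x))
      (nhdsWithin (0 : ℝ) {0}ᶜ) (nhds ((2 : ℝ) • f x)) := by
    have hslope := hasDerivAt_iff_tendsto_slope.mp hx
    have hmap : Filter.Tendsto (fun ε : ℝ => x + ε) (nhdsWithin (0 : ℝ) {0}ᶜ)
        (nhdsWithin x {x}ᶜ) := by
      apply tendsto_nhdsWithin_of_tendsto_nhds_of_eventually_within
      · have h : Filter.Tendsto (fun ε : ℝ => x + ε) (nhds (0 : ℝ)) (nhds (x + 0)) :=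
          Filter.Tendsto.const_add _ Filter.tendsto_id
        simpa using h.mono_left nhdsWithin_le_nhds
      · filter_upwards [self_mem_nhdsWithin] with ε hε
        simp only [Set.mem_compl_iff, Set.mem_singleton_iff] at hε ⊢
        intro h; exact hε (by linarith)
    have h2 : Filter.Tendsto (fun ε : ℝ => ε⁻¹ • (F (x + ε) - F x))
        (nhdsWithin (0 : ℝ) {0}ᶜ) (nhds (f x)) := by
      refine (hslope.comp hmap).congr (fun ε => ?_)
      simp [slope, Function.comp]
    have h3 := h2.const_smul (2 : ℝ)
    refine h3.congr (fun ε => ?_)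
    rw [smul_smul, div_eq_mul_inv]
  have lim2 : Filter.Tendsto (fun ε : ℝ => (2 / ε ^ 2) • (∫ y in x..(x + ε), G y))
      (nhdsWithin (0 : ℝ) {0}ᶜ) (nhds 0) := by
    rw [NormedAddCommGroup.tendsto_nhds_zero]
    intro δ hδ
    have hlo := hasDerivAt_iff_isLittleO.mp hx
    have hev : ∀ᶠ y in nhds x, ‖F y - F x - (y - x) • f x‖ ≤ (δ / 8) * ‖y - x‖ :=
      hlo.def (by positivity)
    rw [Metric.eventually_nhds_iff] at hev
    obtain ⟨r, hr, hball⟩ := hev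
    have hev2 : ∀ᶠ ε in nhds (0 : ℝ), |ε| < r := by
      filter_upwards [Metric.ball_mem_nhds (0 : ℝ) hr] with ε hε
      simpa [Real.dist_eq] using hε
    filter_upwards [self_mem_nhdsWithin, hev2.filter_mono nhdsWithin_le_nhds] with ε hε0 hεr
    have hεne : ε ≠ 0 := fun h => hε0 (by simp [h])
    have hb : ∀ y ∈ Set.uIoc x (x + ε), ‖G y‖ ≤ δ / 8 * |ε| := by
      intro y hy
      have hy1 : |y - x| ≤ |ε| := by
        rw [abs_le]
        rcases Set.mem_uIoc.mp hy with ⟨h1, h2⟩ | ⟨h1, h2⟩ <;>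
          constructor <;> nlinarith [le_abs_self ε, neg_abs_le ε]
      have hdist : dist y x < r := by
        rw [Real.dist_eq]; exact lt_of_le_of_lt hy1 hεr
      calc ‖G y‖ ≤ δ / 8 * ‖y - x‖ := hball hdist
        _ ≤ δ / 8 * |ε| := by
            rw [Real.norm_eq_abs]
            exact mul_le_mul_of_nonneg_left hy1 (by positivity)
    have hnorm := intervalIntegral.norm_integral_le_of_norm_le_const hb
    rw [show x + ε - x = ε by ring] at hnorm
    rw [norm_smul]
    have hpos : (0 : ℝ) < ε ^ 2 := by positivity
    have h1 : ‖(2 / ε ^ 2 : ℝ)‖ = 2 / ε ^ 2 := by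
      rw [Real.norm_eq_abs, abs_of_pos (by positivity)]
    calc ‖(2 / ε ^ 2 : ℝ)‖ * ‖∫ y in x..(x + ε), G y‖
        ≤ (2 / ε ^ 2) * (δ / 8 * |ε| * |ε|) := by
          rw [h1]
          exact mul_le_mul_of_nonneg_left hnorm (by positivity)
      _ = δ / 4 := by
          have : |ε| * |ε| = ε ^ 2 := by rw [← abs_mul, abs_mul_self, sq]
          field_simp
          nlinarith [this]
      _ < δ := by linarith
  have hfin : Filter.Tendsto
      (fun ε : ℝ => (2 / ε) • (F (x + ε) - F x) - (2 / ε ^ 2) • (∫ y in x..(x + ε), G y) - f x)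
      (nhdsWithin (0 : ℝ) {0}ᶜ) (nhds ((2 : ℝ) • f x - 0 - f x)) :=
    (lim1.sub lim2).sub tendsto_const_nhds
  have hval : (2 : ℝ) • f x - 0 - f x = f x := by
    rw [two_smul]; abel
  rw [hval] at hfin
  refine Filter.Tendsto.congr' ?_ hfin
  filter_upwards [self_mem_nhdsWithin] with ε hε
  exact (hkey ε (fun h => hε (by simp [h]))).symm
end

section
/- Let φ : (a,b) → ℝ be continuous. If the second symmetric upper derivative SD²φ(x) = limsup_{h→0}(φ(x+h)+φ(x−h)−2φ(x))/h² is nonnegative for all x in (a,b), then φ is convex on (a,b). -/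
open Filter Set

/-- Key lemma: if `f` is continuous on `(a,b)` and at every point there are arbitrarily
small nonzero `d` with `f(x+d)+f(x-d)-2f x > 0`, then `f` lies below every chord. -/
lemma chord_le_aux (a b : ℝ) (f : ℝ → ℝ) (hc : ContinuousOn f (Set.Ioo a b))
    (h : ∀ x ∈ Set.Ioo a b, ∃ᶠ d in nhdsWithin (0:ℝ) {0}ᶜ,
      0 < f (x + d) + f (x - d) - 2 * f x)
    {u v : ℝ} (hu : u ∈ Set.Ioo a b) (hv : v ∈ Set.Ioo a b) (huv : u < v)
    {z : ℝ} (hz : z ∈ Set.Icc u v) :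
    f z ≤ f u + (f v - f u) / (v - u) * (z - u) := by
  set s : ℝ := (f v - f u) / (v - u) with hs
  set g : ℝ → ℝ := fun t => f t - (f u + s * (t - u)) with hg
  by_contra hzc
  have hvu : v - u ≠ 0 := sub_ne_zero.mpr huv.ne'
  have hsub : Set.Icc u v ⊆ Set.Ioo a b := fun t ht =>
    ⟨lt_of_lt_of_le hu.1 ht.1, lt_of_le_of_lt ht.2 hv.2⟩
  have hgc : ContinuousOn g (Set.Icc u v) := by
    apply ContinuousOn.sub (hc.mono hsub)
    fun_prop
  obtain ⟨c, hcmem, hcmax⟩ := isCompact_Icc.exists_isMaxOn (Set.nonempty_Icc.mpr huv.le) hgc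
  have hmax : ∀ t ∈ Set.Icc u v, g t ≤ g c := hcmax
  have hgz : 0 < g z := by
    simp only [hg]
    push_neg at hzc
    linarith
  have hgu : g u = 0 := by simp [hg]
  have hgv : g v = 0 := by
    simp only [hg, hs]
    field_simp
    ring
  have hgc0 : 0 < g c := lt_of_lt_of_le hgz (hmax z hz)
  have hcu : u < c := (hcmem.1).lt_of_ne (by rintro rfl; rw [hgu] at hgc0; linarith)
  have hcv : c < v := (hcmem.2).lt_of_ne (by rintro rfl; rw [hgv] at hgc0; linarith)
  have hcab : c ∈ Set.Ioo a b := hsub ⟨hcu.le, hcv.le⟩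
  set δ := min (c - u) (v - c) with hδ
  have hδpos : 0 < δ := lt_min (by linarith) (by linarith)
  have hev : ∀ᶠ d in nhdsWithin (0:ℝ) {0}ᶜ, |d| < δ := by
    apply eventually_nhdsWithin_of_eventually_nhds
    have : Metric.ball (0:ℝ) δ ∈ nhds (0:ℝ) := Metric.ball_mem_nhds 0 hδpos
    filter_upwards [this] with d hd
    simpa [Real.dist_eq] using hd
  obtain ⟨d, hd1, hd2⟩ := ((h c hcab).and_eventually hev).exists
  have habs1 : |d| ≤ c - u := le_trans hd2.le (min_le_left _ _)
  have habs2 : |d| ≤ v - c := le_trans hd2.le (min_le_right _ _)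
  have hda := abs_le.mp habs1
  have hdb := abs_le.mp habs2
  have h1 : g (c + d) ≤ g c := hmax _ ⟨by linarith, by linarith⟩
  have h2 : g (c - d) ≤ g c := hmax _ ⟨by linarith, by linarith⟩
  simp only [hg] at h1 h2
  have key : s * (c + d - u) + s * (c - d - u) = 2 * (s * (c - u)) := by ring
  linarith

lemma convexOn_of_freq (a b : ℝ) (f : ℝ → ℝ) (hc : ContinuousOn f (Set.Ioo a b))
    (h : ∀ x ∈ Set.Ioo a b, ∃ᶠ d in nhdsWithin (0:ℝ) {0}ᶜ,
      0 < f (x + d) + f (x - d) - 2 * f x) :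
    ConvexOn ℝ (Set.Ioo a b) f := by
  refine ⟨convex_Ioo a b, fun x hx y hy p q hp hq hpq => ?_⟩
  simp only [smul_eq_mul]
  have hpq' : p = 1 - q := by linarith
  subst hpq'
  rcases lt_trichotomy x y with hxy | hxy | hxy
  · have hq1 : 0 ≤ q * (y - x) := mul_nonneg hq (by linarith)
    have hp1 : 0 ≤ (1 - q) * (y - x) := mul_nonneg hp (by linarith)
    have hz : (1 - q) * x + q * y ∈ Set.Icc x y := ⟨by linarith, by linarith⟩
    have hch := chord_le_aux a b f hc h hx hy hxy hz
    have hne : y - x ≠ 0 := sub_ne_zero.mpr hxy.ne'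
    have hzx : (1 - q) * x + q * y - x = q * (y - x) := by ring
    have hdiv : (f y - f x) / (y - x) * (q * (y - x)) = q * (f y - f x) := by
      field_simp
    rw [hzx, hdiv] at hch
    linarith
  · subst hxy
    have : (1 - q) * x + q * x = x := by ring
    rw [this]; linarith
  · have hq1 : 0 ≤ q * (x - y) := mul_nonneg hq (by linarith)
    have hp1 : 0 ≤ (1 - q) * (x - y) := mul_nonneg hp (by linarith)
    have hz : (1 - q) * x + q * y ∈ Set.Icc y x := ⟨by linarith, by linarith⟩
    have hch := chord_le_aux a b f hc h hy hx hxy hz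
    have hne : x - y ≠ 0 := sub_ne_zero.mpr hxy.ne'
    have hzx : (1 - q) * x + q * y - y = (1 - q) * (x - y) := by ring
    have hdiv : (f x - f y) / (x - y) * ((1 - q) * (x - y)) = (1 - q) * (f x - f y) := by
      field_simp
    rw [hzx, hdiv] at hch
    linarith

/-- The Schwarz-derivative convexity criterion: a continuous function on `(a,b)` whose
second symmetric upper derivative is nonnegative everywhere is convex. -/
theorem convexOn_of_secondSymDeriv_nonneg (a b : ℝ) (φ : ℝ → ℝ)
    (hc : ContinuousOn φ (Set.Ioo a b))
    (h : ∀ x ∈ Set.Ioo a b,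
      (0 : EReal) ≤ Filter.limsup
        (fun h : ℝ => (((φ (x + h) + φ (x - h) - 2 * φ x) / h ^ 2 : ℝ) : EReal))
        (nhdsWithin (0 : ℝ) {0}ᶜ)) :
    ConvexOn ℝ (Set.Ioo a b) φ := by
  -- for each ε > 0, the perturbation φ + ε x² is convex
  have hpert : ∀ ε : ℝ, 0 < ε → ConvexOn ℝ (Set.Ioo a b) (fun t => φ t + ε * t ^ 2) := by
    intro ε hε
    apply convexOn_of_freq a b _ (by fun_prop)
    intro x hx
    have hfreq : ∃ᶠ d in nhdsWithin (0:ℝ) {0}ᶜ,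
        ((-(2*ε) : ℝ) : EReal) < ((φ (x + d) + φ (x - d) - 2 * φ x) / d ^ 2 : ℝ) := by
      by_contra hcon
      rw [Filter.not_frequently] at hcon
      have hle : Filter.limsup
          (fun d : ℝ => (((φ (x + d) + φ (x - d) - 2 * φ x) / d ^ 2 : ℝ) : EReal))
          (nhdsWithin (0:ℝ) {0}ᶜ) ≤ ((-(2*ε) : ℝ) : EReal) := by
        apply Filter.limsup_le_of_le (by isBoundedDefault)
        filter_upwards [hcon] with d hd
        exact not_lt.mp hd
      have := le_trans (h x hx) hle
      have hneg : ((-(2*ε) : ℝ) : EReal) < (0 : EReal) := by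
        rw [show (0:EReal) = ((0:ℝ):EReal) from rfl, EReal.coe_lt_coe_iff]
        linarith
      exact absurd this (not_le.mpr hneg)
    have hne : ∀ᶠ d in nhdsWithin (0:ℝ) {0}ᶜ, d ≠ 0 := by
      filter_upwards [self_mem_nhdsWithin] with d hd
      simpa using hd
    refine (hfreq.and_eventually hne).mono ?_
    rintro d ⟨hd1, hd0⟩
    rw [EReal.coe_lt_coe_iff] at hd1
    have hd2 : (0:ℝ) < d ^ 2 := by positivity
    have hq : -(2*ε) * d ^ 2 < φ (x + d) + φ (x - d) - 2 * φ x :=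
      (lt_div_iff₀ hd2).mp hd1
    have hring : (x + d) ^ 2 + (x - d) ^ 2 - 2 * x ^ 2 = 2 * d ^ 2 := by ring
    nlinarith
  refine ⟨convex_Ioo a b, fun x hx y hy p q hp hq hpq => ?_⟩
  simp only [smul_eq_mul]
  have hpq' : p = 1 - q := by linarith
  subst hpq'
  set z : ℝ := (1 - q) * x + q * y with hz
  have hC : 0 ≤ (1 - q) * x ^ 2 + q * y ^ 2 - z ^ 2 := by
    have h1 := mul_nonneg (mul_nonneg hp hq) (sq_nonneg (x - y))
    simp only [hz]
    nlinarith [h1]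
  set C : ℝ := (1 - q) * x ^ 2 + q * y ^ 2 - z ^ 2 with hCdef
  have hkey : ∀ ε : ℝ, 0 < ε → φ z ≤ (1 - q) * φ x + q * φ y + ε * C := by
    intro ε hε
    have hcv := (hpert ε hε).2 hx hy hp hq hpq
    simp only [smul_eq_mul] at hcv
    simp only [hCdef, hz] at *
    nlinarith [hcv]
  have hfinal : φ z ≤ (1 - q) * φ x + q * φ y := by
    apply le_of_forall_pos_le_add
    intro δ hδ
    have hεpos : 0 < δ / (C + 1) := by positivity
    have := hkey _ hεpos
    have hCle : δ / (C + 1) * C ≤ δ := by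
      rw [div_mul_eq_mul_div, div_le_iff₀ (by linarith)]
      nlinarith
    linarith
  exact hfinal
end

section
/- Let W = {(A, x) ∈ GL_{n,n+1} × P(K^{n+1}) : Ax = 0} be the solution variety of homogeneous linear systems. Then W_{(k)} = {(A,x) ∈ W : A ∈ P_{(k)}} is a smooth submanifold, being the preimage of the regular value 0 of the map ψ : P_{(k)} × (K^{n+1} \ {0}) → K^n, ψ(A,x) = Ax; in particular 0 is a regular value of ψ. -/
open scoped BigOperators
open Matrix

attribute [local instance] Matrix.frobeniusNormedAddCommGroup Matrix.frobeniusNormedSpace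

/-- The map `ψ(A, x) = Ax` on (the cone over) `GL_{n,n+1} × (K^{n+1} \ {0})`. -/
def psiMap {𝕜 : Type*} [RCLike 𝕜] {n : ℕ}
    (p : Matrix (Fin n) (Fin (n + 1)) 𝕜 × (Fin (n + 1) → 𝕜)) : Fin n → 𝕜 :=
  p.1.mulVec p.2

/-- `0` is a regular value of `ψ(A,x) = Ax` on the cone over the solution variety: at every
`(A, x)` with `A` of full rank, `x ≠ 0` and `Ax = 0`, the derivative of `ψ` is
surjective (hence `W_{(k)} = ψ⁻¹(0)` is a smooth submanifold). -/
theorem psi_deriv_surjective {𝕜 : Type*} [RCLike 𝕜] {n : ℕ}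
    (A : Matrix (Fin n) (Fin (n + 1)) 𝕜) (x : Fin (n + 1) → 𝕜)
    (hA : A.rank = n) (hx : x ≠ 0) (hAx : A.mulVec x = 0) :
    Function.Surjective ⇑(fderiv 𝕜 (psiMap (𝕜 := 𝕜) (n := n)) (A, x)) := by
  classical
  -- bundle `(A, x) ↦ A.mulVec x` as a continuous bilinear map
  let L : Matrix (Fin n) (Fin (n + 1)) 𝕜 →L[𝕜] (Fin (n + 1) → 𝕜) →L[𝕜] (Fin n → 𝕜) :=
    LinearMap.toContinuousLinearMap
      ((LinearMap.toContinuousLinearMap :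
          ((Fin (n + 1) → 𝕜) →ₗ[𝕜] (Fin n → 𝕜)) ≃ₗ[𝕜]
            ((Fin (n + 1) → 𝕜) →L[𝕜] (Fin n → 𝕜))).toLinearMap.comp
        (Matrix.toLin' : Matrix (Fin n) (Fin (n + 1)) 𝕜 ≃ₗ[𝕜] _).toLinearMap)
  have hL : ∀ (M : Matrix (Fin n) (Fin (n + 1)) 𝕜) (v : Fin (n + 1) → 𝕜),
      L M v = M.mulVec v := by
    intro M v
    simp [L, Matrix.toLin'_apply]
  have hbil : IsBoundedBilinearMap 𝕜 fun p :
      Matrix (Fin n) (Fin (n + 1)) 𝕜 × (Fin (n + 1) → 𝕜) => L p.1 p.2 :=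
    L.isBoundedBilinearMap
  have hpsi : psiMap (𝕜 := 𝕜) (n := n) = fun p => L p.1 p.2 := by
    funext p
    simp [psiMap, hL]
  rw [hpsi]; erw [hbil.fderiv]
  -- `A.mulVec` is surjective since `rank A = n`
  have hrange : LinearMap.range A.mulVecLin = ⊤ := by
    apply Submodule.eq_top_of_finrank_eq
    rw [← Matrix.rank, hA]
    simp
  have hsurj : Function.Surjective A.mulVec := by
    intro v
    have : v ∈ LinearMap.range A.mulVecLin := by rw [hrange]; trivial
    obtain ⟨y, hy⟩ := this
    exact ⟨y, hy⟩
  intro v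
  obtain ⟨y, hy⟩ := hsurj v
  refine ⟨(0, y), ?_⟩
  erw [IsBoundedBilinearMap.deriv_apply]
  simp [hbil.deriv_apply, hL, hy, Matrix.zero_mulVec]
end
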